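/- Assume λ₁ > μ₁. Let n : [0,∞) → ℝ⁴ be differentiable with n'(t) = F(n(t)) for all t ≥ 0, with initial condition n₁ₐ(0) > 0, n₁d(0) > 0 and n₁ᵢ(0) = n₂(0) = 0. Then n(t) → (n̄₁ₐ, 0, 0, 0) as t → ∞. -/

import Mathlib

open Filter

/-- The host–virus vector field in coordinates `(n₁ₐ, n₁d, n₁ᵢ, n₂)`. -/
noncomputable def hostVirusField (lam mu C D q kap sig r v mu2 m : ℝ)
    (n : Fin 4 → ℝ) : Fin 4 → ℝ :=
  ![n 0 * (lam - mu - C * (n 0 + n 1 + n 2) - D * n 3) + sig * n 1 + r * n 2,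
    q * D * n 0 * n 3 - (kap * mu + sig) * n 1,
    (1 - q) * D * n 0 * n 3 - (r + v) * n 2,
    m * v * n 2 - (1 - q) * D * n 0 * n 3 - mu2 * n 3]

section AuxLemmas
open Set Real Topology

/-- Invariance: once below `c`, stay below (derivative negative when above `c`). -/
lemma aux_stay_le {x x' : ℝ → ℝ} {c t₀ : ℝ}
    (hd : ∀ t, t₀ ≤ t → HasDerivAt x (x' t) t)
    (h0 : x t₀ ≤ c) (hneg : ∀ t, t₀ ≤ t → c < x t → x' t < 0) :
    ∀ t, t₀ ≤ t → x t ≤ c := by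
  intro t ht
  by_contra hcon
  push_neg at hcon
  have htlt : t₀ < t := by
    rcases eq_or_lt_of_le ht with h | h
    · exact absurd (h ▸ h0) (not_le.2 hcon)
    · exact h
  have hcont : ContinuousOn x (Icc t₀ t) := fun u hu =>
    ((hd u hu.1).continuousAt).continuousWithinAt
  set E : Set ℝ := Icc t₀ t ∩ x ⁻¹' Iic c with hE
  have hEclosed : IsClosed E :=
    hcont.preimage_isClosed_of_isClosed isClosed_Icc isClosed_Iic
  have hEne : E.Nonempty := ⟨t₀, ⟨le_refl _, le_of_lt htlt⟩, h0⟩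
  have hEbdd : BddAbove E := (BddAbove.mono (inter_subset_left) (bddAbove_Icc))
  set s := sSup E with hs
  have hsE : s ∈ E := hEclosed.csSup_mem hEne hEbdd
  have hst : s < t := by
    rcases eq_or_lt_of_le hsE.1.2 with h | h
    · exact absurd (h ▸ hsE.2) (not_le.2 hcon)
    · exact h
  have hanti : StrictAntiOn x (Icc s t) := by
    apply strictAntiOn_of_deriv_neg (convex_Icc s t)
    · exact fun u hu => ((hd u (le_trans hsE.1.1 hu.1)).continuousAt).continuousWithinAt
    · intro u hu
      rw [interior_Icc] at hu
      have hu0 : t₀ ≤ u := le_trans hsE.1.1 (le_of_lt hu.1)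
      have hxu : c < x u := by
        by_contra hxu
        push_neg at hxu
        have : u ∈ E := ⟨⟨hu0, le_of_lt hu.2⟩, hxu⟩
        exact absurd (le_csSup hEbdd this) (not_le.2 hu.1)
      rw [(hd u hu0).deriv]
      exact hneg u hu0 hxu
  have h1 := hanti (left_mem_Icc.2 (le_of_lt hst)) (right_mem_Icc.2 (le_of_lt hst)) hst
  exact absurd hsE.2 (not_le.2 (lt_trans hcon h1))

/-- Invariance: once above `c`, stay above (derivative positive when below `c`). -/
lemma aux_stay_ge {x x' : ℝ → ℝ} {c t₀ : ℝ}
    (hd : ∀ t, t₀ ≤ t → HasDerivAt x (x' t) t)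
    (h0 : c ≤ x t₀) (hpos : ∀ t, t₀ ≤ t → x t < c → 0 < x' t) :
    ∀ t, t₀ ≤ t → c ≤ x t := by
  have h := aux_stay_le (x := fun t => -x t) (x' := fun t => -x' t) (c := -c) (t₀ := t₀)
    (fun t ht => (hd t ht).neg) (by simpa using h0)
    (fun t ht hlt => by
      have hlt' : -c < -x t := hlt
      have : x t < c := by linarith
      have := hpos t ht this
      show -x' t < 0
      linarith)
  intro t ht
  have h2 : -x t ≤ -c := h t ht
  linarith

/-- Eventual entry below `c` under a uniform negative drift when above `c`. -/
lemma aux_enter_le {x x' : ℝ → ℝ} {c T δ : ℝ} (hδ : 0 < δ)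
    (hd : ∀ t, T ≤ t → HasDerivAt x (x' t) t)
    (hneg : ∀ t, T ≤ t → c < x t → x' t ≤ -δ) :
    ∃ t₀, T ≤ t₀ ∧ x t₀ ≤ c := by
  by_contra hcon
  push_neg at hcon
  set g : ℝ → ℝ := fun t => x t + δ * t with hg
  have hgd : ∀ t, T ≤ t → HasDerivAt g (x' t + δ) t := by
    intro t ht
    have h1 : HasDerivAt (fun u : ℝ => δ * u) δ t := by
      simpa using (hasDerivAt_id t).const_mul δ
    exact (hd t ht).add h1
  have hanti : AntitoneOn g (Ici T) := by
    apply antitoneOn_of_deriv_nonpos (convex_Ici T)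
    · exact fun u hu => ((hgd u hu).continuousAt).continuousWithinAt
    · intro u hu
      rw [interior_Ici] at hu
      exact ((hgd u (le_of_lt hu)).differentiableAt).differentiableWithinAt
    · intro u hu
      rw [interior_Ici] at hu
      rw [(hgd u (le_of_lt hu)).deriv]
      have := hneg u (le_of_lt hu) (hcon u (le_of_lt hu))
      linarith
  set t₁ := T + (x T - c) / δ with ht₁
  have hTt₁ : T ≤ t₁ := by
    have h1 : 0 < x T - c := by linarith [hcon T (le_refl T)]
    have h2 : 0 ≤ (x T - c) / δ := le_of_lt (div_pos h1 hδ)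
    rw [ht₁]; linarith
  have := hanti Set.self_mem_Ici hTt₁ hTt₁
  have hx1 : x t₁ ≤ c := by
    have hδt : δ * t₁ = δ * T + (x T - c) := by
      rw [ht₁, mul_add, mul_div_cancel₀ _ hδ.ne']
    simp only [hg] at this
    rw [hδt] at this
    linarith
  exact absurd hx1 (not_le.2 (hcon t₁ hTt₁))

/-- Eventual entry above `c` under exponential growth when below `c`. -/
lemma aux_enter_ge {x x' : ℝ → ℝ} {c T η : ℝ} (hη : 0 < η)
    (hd : ∀ t, T ≤ t → HasDerivAt x (x' t) t)
    (hxT : 0 < x T)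
    (hgrow : ∀ t, T ≤ t → x t < c → η * x t ≤ x' t) :
    ∃ t₀, T ≤ t₀ ∧ c ≤ x t₀ := by
  by_contra hcon
  push_neg at hcon
  have hcT : x T < c := hcon T (le_refl T)
  set g : ℝ → ℝ := fun t => Real.exp (-(η * t)) * x t with hg
  have hgd : ∀ t, T ≤ t →
      HasDerivAt g (Real.exp (-(η * t)) * (x' t - η * x t)) t := by
    intro t ht
    have he : HasDerivAt (fun u => Real.exp (-(η * u))) (-η * Real.exp (-(η * t))) t := by
      have h1 : HasDerivAt (fun u : ℝ => -(η * u)) (-η) t := by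
        simpa using (hasDerivAt_id t).const_mul (-η)
      simpa [mul_comm, Function.comp_def] using (Real.hasDerivAt_exp (-(η * t))).comp t h1
    have : HasDerivAt (fun u => Real.exp (-(η * u)) * x u) _ t := he.mul (hd t ht)
    convert this using 1
    ring
  have hmono : MonotoneOn g (Ici T) := by
    apply monotoneOn_of_deriv_nonneg (convex_Ici T)
    · exact fun u hu => ((hgd u hu).continuousAt).continuousWithinAt
    · intro u hu
      rw [interior_Ici] at hu
      exact ((hgd u (le_of_lt hu)).differentiableAt).differentiableWithinAt
    · intro u hu
      rw [interior_Ici] at hu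
      rw [(hgd u (le_of_lt hu)).deriv]
      have := hgrow u (le_of_lt hu) (hcon u (le_of_lt hu))
      have hepos := Real.exp_pos (-(η * u))
      nlinarith
  set s := max (Real.log (c / x T)) 0 with hsdef
  set t₁ := T + s / η with ht₁
  have hs0 : 0 ≤ s := le_max_right _ _
  have hTt₁ : T ≤ t₁ := by
    have h1 : 0 ≤ s / η := div_nonneg hs0 (le_of_lt hη)
    rw [ht₁]; linarith
  have hmle := hmono Set.self_mem_Ici hTt₁ hTt₁
  -- g T ≤ g t₁ means exp(-ηT) x T ≤ exp(-η t₁) x t₁, so x t₁ ≥ exp(η (t₁ - T)) x T = exp s * x T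
  have hexp : Real.exp (-(η * t₁)) = Real.exp (-(η * T)) * Real.exp (-s) := by
    rw [← Real.exp_add]
    congr 1
    rw [ht₁, mul_add, mul_div_cancel₀ _ hη.ne']
    ring
  have hxpos : 0 < Real.exp (-(η * T)) := Real.exp_pos _
  have hkey : Real.exp s * x T ≤ x t₁ := by
    simp only [hg] at hmle
    rw [hexp] at hmle
    have h2 : Real.exp (-(η*T)) * x T ≤ Real.exp (-(η*T)) * (Real.exp (-s) * x t₁) := by
      linarith [hmle]
    have h3 : x T ≤ Real.exp (-s) * x t₁ := le_of_mul_le_mul_left (by linarith [h2]) hxpos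
    have h4 : Real.exp s * x T ≤ Real.exp s * (Real.exp (-s) * x t₁) :=
      mul_le_mul_of_nonneg_left h3 (le_of_lt (Real.exp_pos s))
    rwa [← mul_assoc, ← Real.exp_add, add_neg_cancel, Real.exp_zero, one_mul] at h4
  have hcs : c / x T ≤ Real.exp s := by
    rcases le_or_gt (c / x T) 0 with h | h
    · exact le_trans h (le_of_lt (Real.exp_pos s))
    · calc c / x T = Real.exp (Real.log (c / x T)) := (Real.exp_log h).symm
        _ ≤ Real.exp s := Real.exp_le_exp.2 (le_max_left _ _)
  have : c ≤ Real.exp s * x T := by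
    rw [div_le_iff₀ hxT] at hcs
    linarith
  exact absurd (le_trans this hkey) (not_le.2 (hcon t₁ hTt₁))

end AuxLemmas

open Set Real Topology

theorem convergence_to_virus_free_without_infection
    (lam mu C D q kap sig r v mu2 m : ℝ)
    (hmu : 0 < mu) (hlm : mu < lam) (hC : 0 < C) (hD : 0 < D)
    (hq0 : 0 < q) (hq1 : q < 1) (hkap : 0 ≤ kap) (hsig : 0 < sig)
    (hr : 0 < r) (hv : 0 < v) (hmu2 : 0 < mu2) (hm : 0 < m)
    (n : ℝ → (Fin 4 → ℝ))
    (hderiv : ∀ t : ℝ, 0 ≤ t → HasDerivAt n (hostVirusField lam mu C D q kap sig r v mu2 m (n t)) t)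
    (h1a : 0 < n 0 0) (h1d : 0 < n 0 1) (h1i : n 0 2 = 0) (h2 : n 0 3 = 0) :
    Tendsto n atTop (nhds ![(lam - mu) / C, 0, 0, 0]) := by
  have hcomp : ∀ i : Fin 4, ∀ t : ℝ, 0 ≤ t → HasDerivAt (fun u => n u i)
      (hostVirusField lam mu C D q kap sig r v mu2 m (n t) i) t :=
    fun i t ht => hasDerivAt_pi.1 (hderiv t ht) i
  have hd0 : ∀ t : ℝ, 0 ≤ t → HasDerivAt (fun u => n u 0)
      (n t 0 * (lam - mu - C * (n t 0 + n t 1 + n t 2) - D * n t 3) + sig * n t 1 + r * n t 2) t := by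
    intro t ht
    simpa [hostVirusField] using hcomp 0 t ht
  have hd1 : ∀ t : ℝ, 0 ≤ t → HasDerivAt (fun u => n u 1)
      (q * D * n t 0 * n t 3 - (kap * mu + sig) * n t 1) t := by
    intro t ht
    simpa [hostVirusField] using hcomp 1 t ht
  have hd2 : ∀ t : ℝ, 0 ≤ t → HasDerivAt (fun u => n u 2)
      ((1 - q) * D * n t 0 * n t 3 - (r + v) * n t 2) t := by
    intro t ht
    simpa [hostVirusField] using hcomp 2 t ht
  have hd3 : ∀ t : ℝ, 0 ≤ t → HasDerivAt (fun u => n u 3)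
      (m * v * n t 2 - (1 - q) * D * n t 0 * n t 3 - mu2 * n t 3) t := by
    intro t ht
    simpa [hostVirusField] using hcomp 3 t ht
  have hcontn : ∀ i : Fin 4, ∀ s : Set ℝ, s ⊆ Ici (0:ℝ) → ContinuousOn (fun u => n u i) s := by
    intro i s hs u hu
    exact ((hcomp i u (hs hu)).continuousAt).continuousWithinAt
  have hz : ∀ t : ℝ, 0 ≤ t → n t 2 = 0 ∧ n t 3 = 0 := by
    intro b hb
    obtain ⟨B, hB⟩ := (isCompact_Icc : IsCompact (Icc (0:ℝ) b)).exists_bound_of_continuousOn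
      (hcontn 0 (Icc 0 b) (fun u hu => hu.1))
    have hB0 : 0 ≤ B := le_trans (norm_nonneg _) (hB 0 (left_mem_Icc.2 hb))
    obtain ⟨K, hK⟩ : ∃ K : ℝ, K = (1-q)*D*B*2 + (r+v) + m*v + mu2 := ⟨_, rfl⟩
    obtain ⟨f, hf⟩ : ∃ f : ℝ → ℝ × ℝ, f = fun u => (n u 2, n u 3) := ⟨_, rfl⟩
    obtain ⟨f', hf'⟩ : ∃ f' : ℝ → ℝ × ℝ, f' = fun u => ((1 - q) * D * n u 0 * n u 3 - (r + v) * n u 2,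
      m * v * n u 2 - (1 - q) * D * n u 0 * n u 3 - mu2 * n u 3) := ⟨_, rfl⟩
    have hfd : ∀ u ∈ Ico (0:ℝ) b, HasDerivWithinAt f (f' u) (Ici u) u := by
      intro u hu
      rw [hf, hf']
      exact ((hd2 u hu.1).prodMk (hd3 u hu.1)).hasDerivWithinAt
    have hbound : ∀ u ∈ Ico (0:ℝ) b, ‖f' u‖ ≤ K * ‖f u‖ + 0 := by
      intro u hu
      rw [add_zero]
      have hBu : |n u 0| ≤ B := by
        have := hB u ⟨hu.1, le_of_lt hu.2⟩
        rwa [Real.norm_eq_abs] at this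
      have h2a : |n u 2| ≤ ‖f u‖ := by
        rw [hf, Prod.norm_def]
        exact le_max_of_le_left (le_of_eq (Real.norm_eq_abs _).symm)
      have h3a : |n u 3| ≤ ‖f u‖ := by
        rw [hf, Prod.norm_def]
        exact le_max_of_le_right (le_of_eq (Real.norm_eq_abs _).symm)
      have hM0 : 0 ≤ ‖f u‖ := norm_nonneg _
      have h1q : (0:ℝ) < 1 - q := by linarith
      have ht1 : |(1 - q) * D * n u 0 * n u 3| ≤ (1-q) * D * B * ‖f u‖ := by
        rw [abs_mul, abs_mul, abs_mul, abs_of_pos h1q, abs_of_pos hD]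
        have hprod : |n u 0| * |n u 3| ≤ B * ‖f u‖ := mul_le_mul hBu h3a (abs_nonneg _) hB0
        calc (1 - q) * D * |n u 0| * |n u 3| = (1 - q) * D * (|n u 0| * |n u 3|) := by ring
          _ ≤ (1 - q) * D * (B * ‖f u‖) := by
              apply mul_le_mul_of_nonneg_left hprod
              positivity
          _ = (1 - q) * D * B * ‖f u‖ := by ring
      have ht2 : |(r + v) * n u 2| ≤ (r + v) * ‖f u‖ := by
        rw [abs_mul, abs_of_pos (by linarith : (0:ℝ) < r + v)]
        exact mul_le_mul_of_nonneg_left h2a (by linarith)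
      have ht3 : |m * v * n u 2| ≤ m * v * ‖f u‖ := by
        rw [abs_mul, abs_mul, abs_of_pos hm, abs_of_pos hv]
        calc m * v * |n u 2| = m * v * |n u 2| := rfl
          _ ≤ m * v * ‖f u‖ := by
              rw [mul_assoc, mul_assoc]
              exact mul_le_mul_of_nonneg_left (mul_le_mul_of_nonneg_left h2a hv.le) hm.le
      have ht4 : |mu2 * n u 3| ≤ mu2 * ‖f u‖ := by
        rw [abs_mul, abs_of_pos hmu2]
        exact mul_le_mul_of_nonneg_left h3a hmu2.le
      rw [hf', Prod.norm_def]
      apply max_le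
      · rw [Real.norm_eq_abs]
        calc |(1 - q) * D * n u 0 * n u 3 - (r + v) * n u 2|
            ≤ |(1 - q) * D * n u 0 * n u 3| + |(r + v) * n u 2| := abs_sub _ _
          _ ≤ (1-q) * D * B * ‖f u‖ + (r + v) * ‖f u‖ := add_le_add ht1 ht2
          _ ≤ K * ‖f u‖ := by
              rw [hK]
              nlinarith [mul_nonneg (mul_nonneg (mul_nonneg h1q.le hD.le) hB0) hM0,
                mul_nonneg (mul_nonneg hm.le hv.le) hM0, mul_nonneg hmu2.le hM0,
                mul_nonneg (add_pos hr hv).le hM0]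
      · rw [Real.norm_eq_abs]
        calc |m * v * n u 2 - (1 - q) * D * n u 0 * n u 3 - mu2 * n u 3|
            ≤ |m * v * n u 2 - (1 - q) * D * n u 0 * n u 3| + |mu2 * n u 3| := abs_sub _ _
          _ ≤ |m * v * n u 2| + |(1 - q) * D * n u 0 * n u 3| + |mu2 * n u 3| := by
              linarith [abs_sub (m * v * n u 2) ((1 - q) * D * n u 0 * n u 3)]
          _ ≤ m * v * ‖f u‖ + (1-q) * D * B * ‖f u‖ + mu2 * ‖f u‖ := by linarith
          _ ≤ K * ‖f u‖ := by
              rw [hK]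
              nlinarith [mul_nonneg (mul_nonneg (mul_nonneg h1q.le hD.le) hB0) hM0,
                mul_nonneg (mul_nonneg hm.le hv.le) hM0, mul_nonneg hmu2.le hM0,
                mul_nonneg (add_pos hr hv).le hM0]
    have hf0 : ‖f 0‖ ≤ 0 := by
      have : f 0 = 0 := by rw [hf]; simp [h1i, h2, Prod.ext_iff]
      rw [this, norm_zero]
    have hcf : ContinuousOn f (Icc 0 b) := by
      rw [hf]
      exact (hcontn 2 (Icc 0 b) (fun u hu => hu.1)).prodMk (hcontn 3 (Icc 0 b) (fun u hu => hu.1))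
    have hgr := norm_le_gronwallBound_of_norm_deriv_right_le hcf hfd hf0 hbound b (right_mem_Icc.2 hb)
    rw [gronwallBound_ε0_δ0] at hgr
    have hfb : f b = 0 := norm_le_zero_iff.1 hgr
    rw [hf, Prod.ext_iff] at hfb
    exact hfb
  obtain ⟨bet, hbet⟩ : ∃ bet : ℝ, bet = kap * mu + sig := ⟨_, rfl⟩
  have hbet0 : 0 < bet := by rw [hbet]; nlinarith
  have hy : ∀ t : ℝ, 0 ≤ t → n t 1 = n 0 1 * Real.exp (-(bet * t)) := by
    intro b hb
    obtain ⟨g, hg⟩ : ∃ g : ℝ → ℝ, g = fun u => Real.exp (bet * u) * n u 1 := ⟨_, rfl⟩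
    have hgd : ∀ u : ℝ, 0 ≤ u → HasDerivAt g 0 u := by
      intro u hu
      have he : HasDerivAt (fun w => Real.exp (bet * w)) (bet * Real.exp (bet * u)) u := by
        have h1 : HasDerivAt (fun w : ℝ => bet * w) bet u := by
          simpa using (hasDerivAt_id u).const_mul bet
        simpa [mul_comm, Function.comp_def] using (Real.hasDerivAt_exp (bet * u)).comp u h1
      have hmul : HasDerivAt (fun w => Real.exp (bet * w) * n w 1) _ u := he.mul (hd1 u hu)
      have h3 := (hz u hu).2
      rw [hg]
      convert hmul using 1
      rw [h3, hbet]
      ring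
    have hconst := constant_of_has_deriv_right_zero (f := g) (a := 0) (b := b)
      (fun u hu => ((hgd u hu.1).continuousAt).continuousWithinAt)
      (fun u hu => (hgd u hu.1).hasDerivWithinAt)
    have hgb := hconst b (right_mem_Icc.2 hb)
    rw [hg] at hgb
    simp only [mul_zero, Real.exp_zero, one_mul] at hgb
    have hepos : (0:ℝ) < Real.exp (bet * b) := Real.exp_pos _
    rw [Real.exp_neg]
    field_simp
    linarith [hgb]
  have hypos : ∀ t : ℝ, 0 ≤ t → 0 < n t 1 := by
    intro t ht
    rw [hy t ht]
    exact mul_pos h1d (Real.exp_pos _)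
  obtain ⟨Fx, hFx⟩ : ∃ Fx : ℝ → ℝ, Fx = fun t =>
      n t 0 * ((lam - mu) - C * (n t 0 + n t 1)) + sig * n t 1 := ⟨_, rfl⟩
  have hdx : ∀ t : ℝ, 0 ≤ t → HasDerivAt (fun u => n u 0) (Fx t) t := by
    intro t ht
    have h0 := hd0 t ht
    have h2z := (hz t ht).1
    have h3z := (hz t ht).2
    rw [hFx]
    convert h0 using 1
    rw [h2z, h3z]
    ring
  have hxpos : ∀ t : ℝ, 0 ≤ t → 0 < n t 0 := by
    by_contra hcon
    push_neg at hcon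
    obtain ⟨t₁, ht₁, hx₁⟩ := hcon
    obtain ⟨S, hS⟩ : ∃ S : Set ℝ, S = Ici (0:ℝ) ∩ (fun u => n u 0) ⁻¹' Iic 0 := ⟨_, rfl⟩
    have hSc : IsClosed S := by
      rw [hS]
      exact (hcontn 0 (Ici 0) (subset_refl _)).preimage_isClosed_of_isClosed isClosed_Ici isClosed_Iic
    have hSne : S.Nonempty := ⟨t₁, by rw [hS]; exact ⟨ht₁, hx₁⟩⟩
    have hSbdd : BddBelow S := ⟨0, fun u hu => by rw [hS] at hu; exact hu.1⟩
    obtain ⟨ts, hts⟩ : ∃ ts : ℝ, ts = sInf S := ⟨_, rfl⟩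
    have hmem : ts ∈ S := by rw [hts]; exact hSc.csInf_mem hSne hSbdd
    rw [hS] at hmem
    have hts0 : (0:ℝ) ≤ ts := hmem.1
    have hpos_before : ∀ u : ℝ, 0 ≤ u → u < ts → 0 < n u 0 := by
      intro u hu hult
      by_contra h
      push_neg at h
      have : u ∈ S := by rw [hS]; exact ⟨hu, h⟩
      have := csInf_le hSbdd this
      rw [← hts] at this
      exact absurd this (not_le.2 hult)
    have htspos : 0 < ts := by
      rcases eq_or_lt_of_le hts0 with h | h
      · exact absurd (h ▸ hmem.2) (not_le.2 h1a)
      · exact h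
    have hxts : n ts 0 = 0 := by
      have hle : n ts 0 ≤ 0 := hmem.2
      have hge : 0 ≤ n ts 0 := by
        have hcts : ContinuousWithinAt (fun u => n u 0) (Iio ts) ts :=
          ((hcomp 0 ts hts0).continuousAt).continuousWithinAt
        refine ge_of_tendsto hcts ?_
        filter_upwards [Ioo_mem_nhdsLT_of_mem (⟨htspos, le_refl ts⟩ : ts ∈ Ioc 0 ts)] with u hu
        exact (hpos_before u hu.1.le hu.2).le
      linarith
    have hFpos : 0 < Fx ts := by
      rw [hFx]
      simp only [hxts, zero_mul, zero_add]
      exact mul_pos hsig (hypos ts hts0)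
    have hslope := ((hdx ts hts0).hasDerivWithinAt (s := Iio ts))
    rw [hasDerivWithinAt_iff_tendsto_slope] at hslope
    rw [diff_singleton_eq_self (by simp : ts ∉ Iio ts)] at hslope
    have hle0 : Fx ts ≤ 0 := by
      refine le_of_tendsto hslope ?_
      filter_upwards [Ioo_mem_nhdsLT_of_mem (⟨htspos, le_refl ts⟩ : ts ∈ Ioc 0 ts)] with u hu
      have hxu : 0 < n u 0 := hpos_before u hu.1.le hu.2
      have hneg : u - ts < 0 := sub_neg.2 hu.2
      rw [slope_def_field, hxts, sub_zero]
      exact le_of_lt (div_neg_of_pos_of_neg hxu hneg)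
    linarith
  have hytend : Tendsto (fun t => n t 1) atTop (𝓝 0) := by
    have h1 : Tendsto (fun t : ℝ => n 0 1 * Real.exp (-(bet * t))) atTop (𝓝 (n 0 1 * 0)) := by
      apply Tendsto.const_mul
      have h2 : Tendsto (fun t : ℝ => bet * t) atTop atTop :=
        Tendsto.const_mul_atTop hbet0 tendsto_id
      exact Real.tendsto_exp_neg_atTop_nhds_zero.comp h2
    rw [mul_zero] at h1
    apply h1.congr'
    filter_upwards [eventually_ge_atTop (0:ℝ)] with t ht
    exact (hy t ht).symm
  obtain ⟨abar, habar⟩ : ∃ abar : ℝ, abar = (lam - mu) / C := ⟨_, rfl⟩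
  have habar0 : 0 < abar := by rw [habar]; exact div_pos (by linarith) hC
  have haC : lam - mu = C * abar := by rw [habar]; field_simp
  have hxtend : Tendsto (fun t => n t 0) atTop (𝓝 abar) := by
    rw [Metric.tendsto_atTop]
    intro ε hε
    obtain ⟨ε', hε'⟩ : ∃ ε' : ℝ, ε' = min (ε/2) (abar/2) := ⟨_, rfl⟩
    have hε'0 : 0 < ε' := by rw [hε']; exact lt_min (by linarith) (by linarith)
    have hε'abar : ε' ≤ abar/2 := by rw [hε']; exact min_le_right _ _
    have hε'ε : ε' ≤ ε/2 := by rw [hε']; exact min_le_left _ _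
    obtain ⟨δu, hδu⟩ : ∃ δu : ℝ, δu = C * ε' * abar := ⟨_, rfl⟩
    have hδu0 : 0 < δu := by rw [hδu]; positivity
    have hev : ∀ᶠ t in atTop, (0:ℝ) ≤ t ∧ sig * n t 1 ≤ δu/2 ∧ n t 1 ≤ ε'/2 := by
      have e2 : ∀ᶠ t in atTop, sig * n t 1 < δu/2 := by
        have h3 : Tendsto (fun t => sig * n t 1) atTop (𝓝 (sig * 0)) := hytend.const_mul sig
        rw [mul_zero] at h3
        exact h3.eventually_lt_const (by positivity)
      have e3 : ∀ᶠ t in atTop, n t 1 < ε'/2 := hytend.eventually_lt_const (by positivity)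
      filter_upwards [eventually_ge_atTop (0:ℝ), e2, e3] with t ha hb hc
      exact ⟨ha, hb.le, hc.le⟩
    obtain ⟨T, hT⟩ := eventually_atTop.1 hev
    have hT0 : (0:ℝ) ≤ T := (hT T (le_refl T)).1
    have hdT : ∀ t, T ≤ t → HasDerivAt (fun u => n u 0) (Fx t) t :=
      fun t ht => hdx t (le_trans hT0 ht)
    have hdrift : ∀ t, T ≤ t → abar + ε' < n t 0 → Fx t ≤ -(δu/2) := by
      intro t ht hgt
      obtain ⟨ht0, hsy, hy2⟩ := hT t ht
      have hyp := hypos t ht0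
      have key : n t 0 * ((lam - mu) - C * (n t 0 + n t 1)) ≤ -δu := by
        have h1 : (lam - mu) - C * (n t 0 + n t 1) ≤ -(C * ε') := by
          rw [haC]
          nlinarith only [mul_lt_mul_of_pos_left hgt hC, mul_pos hC hyp]
        have h2 : n t 0 * ((lam - mu) - C * (n t 0 + n t 1)) ≤ n t 0 * (-(C * ε')) :=
          mul_le_mul_of_nonneg_left h1 (by linarith only [hgt, habar0, hε'0])
        have h3 : n t 0 * (-(C * ε')) ≤ abar * (-(C * ε')) := by
          apply mul_le_mul_of_nonpos_right (by linarith only [hgt, hε'0])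
          nlinarith only [mul_pos hC hε'0]
        rw [hδu]
        nlinarith only [h2, h3]
      rw [hFx]
      simp only []
      linarith only [key, hsy]
    obtain ⟨t₀, ht₀T, ht₀⟩ := aux_enter_le (show (0:ℝ) < δu/2 by linarith) hdT hdrift
    have hstayle : ∀ t, t₀ ≤ t → n t 0 ≤ abar + ε' :=
      aux_stay_le (fun t ht => hdT t (le_trans ht₀T ht)) ht₀
        (fun t ht h => lt_of_le_of_lt (hdrift t (le_trans ht₀T ht) h) (by linarith))
    have hgrow : ∀ t, T ≤ t → n t 0 < abar - ε' → (C*ε'/2) * n t 0 ≤ Fx t := by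
      intro t ht hlt
      obtain ⟨ht0, hsy, hy2⟩ := hT t ht
      have hx0 := hxpos t ht0
      have hy0 := hypos t ht0
      have h1 : C*ε'/2 ≤ (lam - mu) - C * (n t 0 + n t 1) := by
        rw [haC]
        nlinarith only [mul_lt_mul_of_pos_left hlt hC, mul_le_mul_of_nonneg_left hy2 hC.le]
      have h2 : (C*ε'/2) * n t 0 ≤ ((lam - mu) - C * (n t 0 + n t 1)) * n t 0 :=
        mul_le_mul_of_nonneg_right h1 hx0.le
      have h3 : (0:ℝ) ≤ sig * n t 1 := le_of_lt (mul_pos hsig hy0)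
      rw [hFx]
      simp only []
      nlinarith only [h2, h3]
    obtain ⟨t₀', ht₀'T, ht₀'⟩ := aux_enter_ge (show (0:ℝ) < C*ε'/2 by positivity)
      hdT (hxpos T hT0) hgrow
    have hstayge : ∀ t, t₀' ≤ t → abar - ε' ≤ n t 0 :=
      aux_stay_ge (fun t ht => hdT t (le_trans ht₀'T ht)) ht₀'
        (fun t ht h => by
          have hx0 := hxpos t (le_trans hT0 (le_trans ht₀'T ht))
          have h5 := hgrow t (le_trans ht₀'T ht) h
          have h6 : 0 < (C*ε'/2) * n t 0 := by positivity
          linarith only [h5, h6])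
    refine ⟨max t₀ t₀', fun t ht => ?_⟩
    have h1 := hstayle t (le_trans (le_max_left _ _) ht)
    have h2 := hstayge t (le_trans (le_max_right _ _) ht)
    rw [Real.dist_eq]
    exact abs_lt.2 ⟨by linarith, by linarith⟩
  have hztend2 : Tendsto (fun t => n t 2) atTop (𝓝 0) := by
    apply tendsto_const_nhds.congr'
    filter_upwards [eventually_ge_atTop (0:ℝ)] with t ht
    exact ((hz t ht).1).symm
  have hztend3 : Tendsto (fun t => n t 3) atTop (𝓝 0) := by
    apply tendsto_const_nhds.congr'
    filter_upwards [eventually_ge_atTop (0:ℝ)] with t ht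
    exact ((hz t ht).2).symm
  rw [tendsto_pi_nhds]
  intro i
  fin_cases i
  · simpa [← habar] using hxtend
  · simpa using hytend
  · simpa using hztend2
  · simpa using hztend3
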